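/- Let K ⊂ ℝ^n (n ≥ 4) be a convex body such that every orthogonal projection of K onto a hyperplane perpendicular to a fixed hyperplane H is an ellipsoid, and every section of K by a hyperplane parallel to H meeting its interior is an ellipsoid. Then the boundary of K contains no line segment. -/

import Mathlib

noncomputable section

open Metric Set MeasureTheory

/-- Euclidean n-space. -/
abbrev Euc (n : ℕ) := EuclideanSpace ℝ (Fin n)

/-- A convex body: compact, convex, with nonempty interior. -/
def IsConvexBody {n : ℕ} (K : Set (Euc n)) : Prop :=
  IsCompact K ∧ Convex ℝ K ∧ (interior K).Nonempty

/-- `f` is the (orthogonal) reflection of the space with fixed-point set the affine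
subspace `A`: an involutive isometry whose fixed points are exactly `A`. -/
def IsReflectionFix {n : ℕ} (f : Euc n → Euc n) (A : AffineSubspace ℝ (Euc n)) : Prop :=
  Isometry f ∧ f ∘ f = id ∧ {x | f x = x} = (A : Set (Euc n))

/-- `A` is a plane of symmetry of the set `K`. -/
def IsSymmetryPlane {n : ℕ} (K : Set (Euc n)) (A : AffineSubspace ℝ (Euc n)) : Prop :=
  ∃ f : Euc n → Euc n, IsReflectionFix f A ∧ f '' K = K

/-- `L` is a plane of symmetry of the set `s` within the flat `P`:
some involutive isometry of the ambient space preserves `P`, has exactly `L` as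
fixed-point set inside `P`, and maps `s` onto itself. -/
def IsSymmPlaneOfIn {n : ℕ} (s : Set (Euc n)) (P L : AffineSubspace ℝ (Euc n)) : Prop :=
  L ≤ P ∧ ∃ f : Euc n → Euc n, Isometry f ∧ f ∘ f = id ∧
    f '' (P : Set (Euc n)) = (P : Set (Euc n)) ∧
    {x ∈ (P : Set (Euc n)) | f x = x} = (L : Set (Euc n)) ∧ f '' s = s

/-- `L` is a plane of symmetry of the section `P ∩ K` within the flat `P`. -/
def IsSectionSymmPlane {n : ℕ} (K : Set (Euc n)) (P L : AffineSubspace ℝ (Euc n)) : Prop :=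
  IsSymmPlaneOfIn ((P : Set (Euc n)) ∩ K) P L

/-- A hyperplane: a nonempty affine subspace whose direction has dimension `n - 1`. -/
def IsHyperplane {n : ℕ} (A : AffineSubspace ℝ (Euc n)) : Prop :=
  (A : Set (Euc n)).Nonempty ∧ Module.finrank ℝ A.direction = n - 1

/-- A rotation about the affine subspace `L`: an affine isometry fixing `L`
pointwise whose linear part has determinant one (orientation preserving). -/
def IsRotationAbout {n : ℕ} (f : Euc n ≃ᵃⁱ[ℝ] Euc n) (L : AffineSubspace ℝ (Euc n)) : Prop :=
  (∀ x ∈ L, f x = x) ∧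
    LinearMap.det (f.linearIsometryEquiv.toLinearEquiv : Euc n →ₗ[ℝ] Euc n) = 1

/-- A body of revolution with axis the line `L`. -/
def IsRevolutionBody {n : ℕ} (K : Set (Euc n)) (L : AffineSubspace ℝ (Euc n)) : Prop :=
  IsConvexBody K ∧ (L : Set (Euc n)).Nonempty ∧ Module.finrank ℝ L.direction = 1 ∧
    ∀ f : Euc n ≃ᵃⁱ[ℝ] Euc n, IsRotationAbout f L → f '' K = K

/-- A `k`-dimensional ellipsoid: affine image of a `k`-dimensional unit ball. -/
def IsEllipsoidOfDim {n : ℕ} (k : ℕ) (s : Set (Euc n)) : Prop :=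
  ∃ (T : Euc n ≃ᵃ[ℝ] Euc n) (V : Submodule ℝ (Euc n)), Module.finrank ℝ V = k ∧
    s = T '' (closedBall 0 1 ∩ (V : Set (Euc n)))

/-- The shadow boundary of `K` with respect to the direction submodule `D`:
the union of the touching sets of all supporting flats of `K` with direction `D`. -/
def shadowBoundary {n : ℕ} (K : Set (Euc n)) (D : Submodule ℝ (Euc n)) : Set (Euc n) :=
  ⋃ l ∈ {l : AffineSubspace ℝ (Euc n) | l.direction = D ∧
      ((l : Set (Euc n)) ∩ K).Nonempty ∧ (l : Set (Euc n)) ∩ interior K = ∅},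
    ((l : Set (Euc n)) ∩ K)

/-- `p` is a Larman point of `K`: every hyperplane section of `K` through `p` has
an `(n-2)`-plane of symmetry. -/
def IsLarmanPoint {n : ℕ} (K : Set (Euc n)) (p : Euc n) : Prop :=
  p ∈ interior K ∧ ∀ P : AffineSubspace ℝ (Euc n), IsHyperplane P → p ∈ P →
    ∃ L : AffineSubspace ℝ (Euc n), Module.finrank ℝ L.direction = n - 2 ∧
      IsSectionSymmPlane K P L

/-- `p` is a revolution point of `K`: every hyperplane section of `K` through `p` has
an `(n-2)`-plane of symmetry containing `p`. -/
def IsRevolutionPoint {n : ℕ} (K : Set (Euc n)) (p : Euc n) : Prop :=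
  p ∈ interior K ∧ ∀ P : AffineSubspace ℝ (Euc n), IsHyperplane P → p ∈ P →
    ∃ L : AffineSubspace ℝ (Euc n), Module.finrank ℝ L.direction = n - 2 ∧ p ∈ L ∧
      IsSectionSymmPlane K P L

theorem aux_closure_interior {n : ℕ} {K : Set (Euc n)} (hKconv : Convex ℝ K) {c₁ : Euc n}
    (hc₁ : c₁ ∈ interior K) : K ⊆ closure (interior K) := by
  intro p hp
  have h0 : Filter.Tendsto (fun k : ℕ => (1:ℝ)/(k+1)) Filter.atTop (nhds 0) :=
    tendsto_one_div_add_atTop_nhds_zero_nat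
  have ht : Filter.Tendsto (fun k : ℕ => ((1:ℝ)/(k+1)) • c₁ + (1 - (1:ℝ)/(k+1)) • p)
      Filter.atTop (nhds p) := by
    have h1 : Filter.Tendsto (fun k : ℕ => (1 - (1:ℝ)/(k+1))) Filter.atTop (nhds 1) := by
      simpa using Filter.Tendsto.const_sub (1:ℝ) h0
    have := (h0.smul_const c₁).add (h1.smul_const p)
    simpa using this
  refine mem_closure_of_tendsto ht (Filter.Eventually.of_forall fun k => ?_)
  have hkpos : (0:ℝ) < k + 1 := by positivity
  refine hKconv.combo_interior_self_mem_interior hc₁ hp (by positivity) ?_ (by ring)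
  have : (1:ℝ)/(k+1) ≤ 1 := by
    rw [div_le_one hkpos]; linarith [Nat.cast_nonneg (α := ℝ) k]
  linarith

set_option maxHeartbeats 2000000 in
/-- If every projection of `K` onto a hyperplane perpendicular to `H`
is an ellipsoid and every section of `K` by a hyperplane parallel to `H` meeting
the interior is an ellipsoid, then `bd K` contains no segment. -/
theorem stmt7 {n : ℕ} (hn : 4 ≤ n) (K : Set (Euc n)) (hK : IsConvexBody K)
    (H : AffineSubspace ℝ (Euc n)) (hH : IsHyperplane H)
    (hproj : ∀ W : Submodule ℝ (Euc n), Module.finrank ℝ W = n - 1 → Wᗮ ≤ H.direction →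
      IsEllipsoidOfDim (n - 1) ((fun x => (W.orthogonalProjectionOnto x : Euc n)) '' K))
    (hsec : ∀ P : AffineSubspace ℝ (Euc n), P.direction = H.direction →
      ((P : Set (Euc n)) ∩ interior K).Nonempty →
      IsEllipsoidOfDim (n - 1) ((P : Set (Euc n)) ∩ K)) :
    ∀ x y : Euc n, x ≠ y → ¬ segment ℝ x y ⊆ frontier K := by
  obtain ⟨hKcomp, hKconv, c₁, hc₁⟩ := hK
  have hKclosed : IsClosed K := hKcomp.isClosed
  have hfK : frontier K ⊆ K := hKclosed.frontier_subset
  have hKsubcl : K ⊆ closure (interior K) := aux_closure_interior hKconv hc₁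
  have hfinE : Module.finrank ℝ (Euc n) = n := by
    simp [finrank_euclideanSpace]
  intro x y hxy hseg
  have hxK : x ∈ K := hfK (hseg (left_mem_segment ℝ x y))
  have hyK : y ∈ K := hfK (hseg (right_mem_segment ℝ x y))
  set z := midpoint ℝ x y with hzdef
  have hzf : z ∈ frontier K := hseg (midpoint_mem_segment x y)
  have hzK : z ∈ K := hfK hzf
  have hznotint : z ∉ interior K := fun h => hzf.2 h
  -- supporting functional
  obtain ⟨f, u, hfu, hfz'⟩ := geometric_hahn_banach_open hKconv.interior isOpen_interior
    (convex_singleton z) (disjoint_singleton_right.mpr hznotint)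
  have hKle : ∀ p ∈ K, f p ≤ u := by
    intro p hp
    exact closure_minimal (fun q hq => (hfu q hq).le)
      (isClosed_le f.continuous continuous_const) (hKsubcl hp)
  have hfz : f z = u := le_antisymm (hKle z hzK) (hfz' z rfl)
  -- the kernel of f has dimension n-1
  have hfne : f (z - c₁) ≠ 0 := by
    have := hfu c₁ hc₁
    simp only [map_sub]
    linarith
  have hker : Module.finrank ℝ (LinearMap.ker (f : Euc n →ₗ[ℝ] ℝ)) = n - 1 := by
    have hrange : LinearMap.range (f : Euc n →ₗ[ℝ] ℝ) = ⊤ := by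
      rw [LinearMap.range_eq_top]
      intro t
      refine ⟨(t / f (z - c₁)) • (z - c₁), ?_⟩
      simp only [ContinuousLinearMap.coe_coe, _root_.map_smul, smul_eq_mul]
      exact div_mul_cancel₀ t hfne
    have h := LinearMap.finrank_range_add_finrank_ker (f : Euc n →ₗ[ℝ] ℝ)
    rw [hrange, finrank_top, Module.finrank_self, hfinE] at h
    omega
  -- choose direction v
  set d := y - x with hddef
  have hd : d ≠ 0 := sub_ne_zero.mpr (Ne.symm hxy)
  obtain ⟨v, hvH, hvker, hvd⟩ :
      ∃ v : Euc n, v ∈ H.direction ∧ f v = 0 ∧ v ∉ Submodule.span ℝ {d} := by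
    have hQ := Submodule.finrank_sup_add_finrank_inf_eq H.direction
      (LinearMap.ker (f : Euc n →ₗ[ℝ] ℝ))
    have hsup := Submodule.finrank_le (H.direction ⊔ LinearMap.ker (f : Euc n →ₗ[ℝ] ℝ))
    rw [hfinE] at hsup
    have hHd := hH.2
    have hint : 2 ≤ Module.finrank ℝ
        ↥(H.direction ⊓ LinearMap.ker (f : Euc n →ₗ[ℝ] ℝ)) := by omega
    by_contra hcon
    push_neg at hcon
    have hle : H.direction ⊓ LinearMap.ker (f : Euc n →ₗ[ℝ] ℝ) ≤ Submodule.span ℝ {d} := by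
      rintro w hw
      rw [Submodule.mem_inf] at hw
      exact hcon w hw.1 hw.2
    have hmono := Submodule.finrank_mono hle
    rw [finrank_span_singleton hd] at hmono
    omega
  have hv0 : v ≠ 0 := fun h => hvd (h ▸ Submodule.zero_mem _)
  set Wv := (Submodule.span ℝ {v})ᗮ with hWvdef
  have horth : Wvᗮ = Submodule.span ℝ {v} := Submodule.orthogonal_orthogonal _
  have hWvrank : Module.finrank ℝ Wv = n - 1 := by
    have h1 := Submodule.finrank_add_finrank_orthogonal (K := Submodule.span ℝ {v})
    rw [finrank_span_singleton hv0, hfinE, ← hWvdef] at h1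
    omega
  have hWvle : Wvᗮ ≤ H.direction := by
    rw [horth]
    exact (Submodule.span_singleton_le_iff_mem v _).mpr hvH
  obtain ⟨T, V, hVrank, hsT⟩ := hproj Wv hWvrank hWvle
  set π : Euc n → Euc n := fun p => (Wv.orthogonalProjectionOnto p : Euc n) with hπdef
  set s : Set (Euc n) := π '' K with hsdef
  -- basic properties of π
  have hπadd : ∀ p q : Euc n, π (p + q) = π p + π q := by
    intro p q; simp [hπdef, map_add]
  have hπsub : ∀ p q : Euc n, π (p - q) = π p - π q := by
    intro p q; simp [hπdef, map_sub]
  have hπsmul : ∀ (t : ℝ) (p : Euc n), π (t • p) = t • π p := by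
    intro t p; simp [hπdef, _root_.map_smul]
  have hπfix : ∀ w ∈ Wv, π w = w := fun w hw => Submodule.starProjection_eq_self_iff.mpr hw
  have hπmem : ∀ p, π p ∈ Wv := fun p => (Wv.orthogonalProjectionOnto p).2
  have hπorth : ∀ p, p - π p ∈ Wvᗮ := fun p => Submodule.sub_starProjection_mem_orthogonal p
  -- a ≠ b
  set a := π x with hadef
  set b := π y with hbdef
  have haS : a ∈ s := ⟨x, hxK, rfl⟩
  have hbS : b ∈ s := ⟨y, hyK, rfl⟩
  have hdv : d ∉ Submodule.span ℝ {v} := by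
    intro hmem
    obtain ⟨t, ht⟩ := Submodule.mem_span_singleton.mp hmem
    have ht0 : t ≠ 0 := by rintro rfl; simp at ht; exact hd ht.symm
    exact hvd (Submodule.mem_span_singleton.mpr ⟨t⁻¹, by rw [← ht, smul_smul,
      inv_mul_cancel₀ ht0, one_smul]⟩)
  have hab : a ≠ b := by
    intro h
    apply hdv
    rw [← horth]
    have : d - π d ∈ Wvᗮ := hπorth d
    have hπd : π d = 0 := by
      rw [hddef, hπsub, ← hadef, ← hbdef, h, sub_self]
    rwa [hπd, sub_zero] at this
  have hmz : π z = midpoint ℝ a b := by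
    rw [hzdef, midpoint_eq_smul_add, midpoint_eq_smul_add, hπsmul, hπadd]
  -- ellipsoid strict convexity: midpoint of preimages
  have hTc : Continuous T := T.continuous_of_finiteDimensional
  have hTsc : Continuous T.symm := T.symm.continuous_of_finiteDimensional
  obtain ⟨a', ⟨ha'b, ha'V⟩, hTa⟩ := hsT ▸ haS
  obtain ⟨b', ⟨hb'b, hb'V⟩, hTb⟩ := hsT ▸ hbS
  have ha'b' : a' ≠ b' := fun h => hab (by rw [← hTa, ← hTb, h])
  set m' := midpoint ℝ a' b' with hm'def
  have hm'eq : m' = (2⁻¹:ℝ) • a' + (2⁻¹:ℝ) • b' := by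
    rw [hm'def, midpoint_eq_smul_add, invOf_eq_inv, smul_add]
  have hm'ball : m' ∈ ball (0 : Euc n) 1 := by
    have hsc := strictConvex_closedBall ℝ (0 : Euc n) 1
    have h2 := hsc ha'b hb'b ha'b' (by norm_num : (0:ℝ) < 2⁻¹) (by norm_num : (0:ℝ) < 2⁻¹)
      (by norm_num)
    rw [interior_closedBall _ one_ne_zero] at h2
    rw [hm'eq]; exact h2
  have hm'V : m' ∈ V := by
    rw [hm'eq]
    exact V.add_mem (V.smul_mem _ ha'V) (V.smul_mem _ hb'V)
  set m := π z with hmdef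
  have hTm : T m' = m := by
    show T m' = m
    rw [hmz, hm'def, T.map_midpoint, hTa, hTb]
  -- W ⊆ T '' V
  obtain ⟨r, hr, hballK⟩ : ∃ r > 0, ball c₁ r ⊆ K := by
    obtain ⟨r, hr, h⟩ := Metric.isOpen_iff.mp isOpen_interior c₁ hc₁
    exact ⟨r, hr, h.trans interior_subset⟩
  set u₀ := π c₁ with hu₀def
  have hu₀s : ∀ w ∈ Wv, dist w u₀ < r → w ∈ s := by
    intro w hw hdist
    refine ⟨c₁ + (w - u₀), hballK ?_, ?_⟩
    · rw [mem_ball, dist_eq_norm]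
      simpa [dist_eq_norm] using hdist
    · rw [hπadd, hπfix _ (Wv.sub_mem hw (hπmem c₁)), ← hu₀def]
      abel
  set c := T 0 with hcdef
  set M := V.map (T.linear : Euc n →ₗ[ℝ] Euc n) with hMdef
  have hTlin : ∀ p : Euc n, T p = (T.linear : Euc n →ₗ[ℝ] Euc n) p + c := by
    intro p
    have h := T.toAffineMap.map_vadd (0 : Euc n) p
    simpa [vadd_eq_add] using h
  have hsM : ∀ q ∈ s, q - c ∈ M := by
    intro q hq
    rw [hsT] at hq
    obtain ⟨p, ⟨_, hpV⟩, hpq⟩ := hq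
    rw [← hpq, hTlin, add_sub_cancel_right]
    exact ⟨p, hpV, rfl⟩
  have hu₀W : u₀ ∈ Wv := hπmem c₁
  have hu₀M : u₀ - c ∈ M := hsM u₀ (hu₀s u₀ hu₀W (by simpa using hr))
  have hWM : Wv ≤ M := by
    intro w hw
    rcases eq_or_ne w 0 with rfl | hw0
    · exact M.zero_mem
    · have hnorm : (0:ℝ) < ‖w‖ := norm_pos_iff.mpr hw0
      set t : ℝ := r / (2 * ‖w‖) with htdef
      have ht : 0 < t := by positivity
      have htw : t * ‖w‖ = r / 2 := by rw [htdef]; field_simp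
      have hwt : u₀ + t • w ∈ s := by
        refine hu₀s _ (Wv.add_mem hu₀W (Wv.smul_mem _ hw)) ?_
        rw [dist_eq_norm, add_sub_cancel_left, norm_smul, Real.norm_eq_abs, abs_of_pos ht, htw]
        linarith
      have h1 : (u₀ + t • w) - c ∈ M := hsM _ hwt
      have h2 : t • w ∈ M := by
        have h3 := M.sub_mem h1 hu₀M
        have h4 : (u₀ + t • w) - c - (u₀ - c) = t • w := by abel
        rwa [h4] at h3
      have h5 := M.smul_mem t⁻¹ h2
      rwa [smul_smul, inv_mul_cancel₀ ht.ne', one_smul] at h5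
  have hWeqM : Wv = M := by
    refine Submodule.eq_of_le_of_finrank_le hWM ?_
    rw [hMdef, LinearEquiv.finrank_map_eq, hVrank, hWvrank]
  have hcW : c ∈ Wv := by
    have h1 : u₀ - c ∈ Wv := by rw [hWeqM]; exact hu₀M
    have h2 := Wv.sub_mem hu₀W h1
    simpa using h2
  have hVT : ∀ w ∈ Wv, T.symm w ∈ V := by
    intro w hw
    have hwc : w - c ∈ M := by rw [← hWeqM]; exact Wv.sub_mem hw hcW
    obtain ⟨p, hpV, hp⟩ := hwc
    have hTp : T p = w := by rw [hTlin, hp]; abel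
    rw [← hTp, T.symm_apply_apply]
    exact hpV
  -- neighborhood of m inside s (within Wv)
  obtain ⟨δ, hδ, hδball⟩ : ∃ δ > 0, ∀ w ∈ Wv, dist w m < δ → w ∈ s := by
    have hε : (0:ℝ) < 1 - ‖m'‖ := by
      have := mem_ball_zero_iff.mp hm'ball; linarith
    have hcont : ContinuousAt T.symm m := hTsc.continuousAt
    rw [Metric.continuousAt_iff] at hcont
    obtain ⟨δ, hδ, hδ'⟩ := hcont (1 - ‖m'‖) hε
    refine ⟨δ, hδ, fun w hw hdist => ?_⟩
    have h1 : dist (T.symm w) (T.symm m) < 1 - ‖m'‖ := hδ' hdist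
    have hsm : T.symm m = m' := by rw [← hTm, T.symm_apply_apply]
    have h2 : ‖T.symm w - m'‖ < 1 - ‖m'‖ := by rwa [hsm, dist_eq_norm] at h1
    have hball2 : T.symm w ∈ closedBall (0:Euc n) 1 := by
      rw [mem_closedBall_zero_iff]
      have h3 := norm_add_le (T.symm w - m') m'
      rw [sub_add_cancel] at h3
      linarith
    rw [hsT]
    exact ⟨T.symm w, ⟨hball2, hVT w hw⟩, T.apply_symm_apply w⟩
  -- work in the subtype ↥Wv
  set π₀ := Wv.orthogonalProjectionOnto with hπ₀def
  have hπ₀surj : Function.Surjective π₀ := fun w =>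
    ⟨(w : Euc n), Submodule.orthogonalProjectionOnto_mem_subspace_eq_self w⟩
  have hopen : IsOpenMap π₀ := ContinuousLinearMap.isOpenMap π₀ hπ₀surj
  set U₀ : Set Wv := π₀ '' interior K with hU₀def
  have hU₀open : IsOpen U₀ := hopen _ isOpen_interior
  have hU₀conv : Convex ℝ U₀ := by
    have := (hKconv.interior).linear_image (π₀ : Euc n →ₗ[ℝ] Wv)
    simpa using this
  set K₀ : Set Wv := π₀ '' K with hK₀def
  have hK₀cl : K₀ ⊆ closure U₀ := by
    rintro w ⟨p, hp, rfl⟩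
    exact image_closure_subset_closure_image π₀.continuous ⟨p, hKsubcl hp, rfl⟩
  set m₀ := π₀ z with hm₀def
  have hm₀m : (m₀ : Euc n) = m := rfl
  have hballK₀ : ∀ w₀ : Wv, dist w₀ m₀ < δ → w₀ ∈ K₀ := by
    intro w₀ hw
    have hdist : dist (w₀ : Euc n) m < δ := by rwa [Subtype.dist_eq, hm₀m] at hw
    obtain ⟨k, hk, hkw⟩ := hδball (w₀ : Euc n) w₀.2 hdist
    exact ⟨k, hk, Subtype.ext hkw⟩
  have hm₀U : m₀ ∈ U₀ := by
    have hc₀U : π₀ c₁ ∈ U₀ := ⟨c₁, hc₁, rfl⟩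
    set c₀ := π₀ c₁ with hc₀def
    rcases eq_or_ne m₀ c₀ with heq | hne
    · rw [heq]; exact hc₀U
    · have hnorm : (0:ℝ) < ‖m₀ - c₀‖ := by
        rw [norm_pos_iff, sub_ne_zero]; exact hne
      set t : ℝ := δ / (2 * ‖m₀ - c₀‖) with htdef
      have ht : 0 < t := by positivity
      have hnorm' : ‖(m₀ : Euc n) - (c₀ : Euc n)‖ ≠ 0 := by
        rw [← Submodule.coe_sub]; simpa using hnorm.ne'
      have htw : t * ‖m₀ - c₀‖ = δ / 2 := by
        rw [htdef]; field_simp [hnorm']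
      set q : Wv := m₀ + t • (m₀ - c₀) with hqdef
      have hq : q ∈ closure U₀ := by
        refine hK₀cl (hballK₀ q ?_)
        rw [hqdef, dist_eq_norm, add_sub_cancel_left, norm_smul, Real.norm_eq_abs,
          abs_of_pos ht, htw]
        linarith
      set β : ℝ := 1 / (1 + t) with hβdef
      have h1t : (0:ℝ) < 1 + t := by linarith
      have hβ : β * (1 + t) = 1 := by rw [hβdef]; field_simp
      have hβpos : 0 < β := by rw [hβdef]; positivity
      have hcomb := hU₀conv.combo_interior_closure_mem_interior
        (x := c₀) (y := q) (a := t * β) (b := β)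
        (by rw [hU₀open.interior_eq]; exact hc₀U) hq
        (by positivity) hβpos.le (by linarith [hβ, mul_comm t β]; )
      have hkey : (t * β) • c₀ + β • q = m₀ := by
        rw [hqdef]
        have : (t * β) • c₀ + β • (m₀ + t • (m₀ - c₀)) = (β * (1 + t)) • m₀ := by module
        rw [this, hβ, one_smul]
      rw [hkey, hU₀open.interior_eq] at hcomb
      exact hcomb
  obtain ⟨k, hkint, hkm⟩ := hm₀U
  have hπkz : π k = π z := by
    show ((π₀ k : Euc n)) = ((π₀ z : Euc n))
    rw [hkm]
  have hkz : k - z ∈ Submodule.span ℝ {v} := by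
    rw [← horth]
    have h1 := Wvᗮ.sub_mem (hπorth k) (hπorth z)
    have h2 : (k - π k) - (z - π z) = k - z := by rw [hπkz]; abel
    rwa [h2] at h1
  obtain ⟨t, ht⟩ := Submodule.mem_span_singleton.mp hkz
  have hfk : f k = u := by
    have h1 : f (k - z) = 0 := by
      rw [← ht, _root_.map_smul, hvker, smul_eq_mul, mul_zero]
    rw [map_sub] at h1
    have := hfz
    linarith
  have := hfu k hkint
  rw [hfk] at this
  exact lt_irrefl u this
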